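/- Let k be a field and let φ : k[Z00, Z01, Z10, Z11] → k[x, y] be the k-algebra homomorphism determined by Z00 ↦ x², Z01 ↦ x·y, Z10 ↦ x·y, Z11 ↦ y². Then the kernel of φ is exactly the ideal generated by Z01 − Z10 and Z00·Z11 − Z01·Z10. -/

import Mathlib

open MvPolynomial

set_option synthInstance.maxHeartbeats 1000000
set_option maxHeartbeats 1000000

open MvPolynomial

namespace SegreAux

variable (k : Type*) [Field k]

noncomputable abbrev I : Ideal (MvPolynomial (Fin 4) k) :=
  Ideal.span {(X 1 - X 2 : MvPolynomial (Fin 4) k), X 0 * X 3 - X 1 * X 2}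

noncomputable abbrev pi : MvPolynomial (Fin 4) k →+* MvPolynomial (Fin 4) k ⧸ I k :=
  Ideal.Quotient.mk (I k)

noncomputable def N (d : Fin 2 →₀ ℕ) : MvPolynomial (Fin 4) k ⧸ I k :=
  pi k (X 0) ^ (d 0 / 2) * pi k (X 1) ^ (d 0 % 2) * pi k (X 3) ^ (d 1 / 2)

variable {k}

lemma h1 : pi k (X 1) = pi k (X 2) := by
  rw [Ideal.Quotient.mk_eq_mk_iff_sub_mem]
  exact Ideal.subset_span (Set.mem_insert _ _)

lemma h2 : pi k (X 0) * pi k (X 3) = pi k (X 1) * pi k (X 1) := by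
  have : pi k (X 0 * X 3) = pi k (X 1 * X 2) := by
    rw [Ideal.Quotient.mk_eq_mk_iff_sub_mem]
    exact Ideal.subset_span (Set.mem_insert_of_mem _ rfl)
  rw [map_mul, map_mul, ← h1] at this
  exact this

lemma pow_reduce (q r : ℕ) :
    pi k (X 1) ^ (2 * q + r) = (pi k (X 0) * pi k (X 3)) ^ q * pi k (X 1) ^ r := by
  induction q with
  | zero => simp
  | succ n ih =>
      have : 2 * (n + 1) + r = (2 * n + r) + 2 := by ring
      rw [this, pow_add, ih, pow_two, ← h2, pow_succ]
      ring

end SegreAux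

namespace SegreAux

variable {k : Type*} [Field k]

noncomputable def Phi : MvPolynomial (Fin 2) k →ₗ[k] MvPolynomial (Fin 4) k ⧸ I k :=
  Finsupp.linearCombination k (N k) ∘ₗ (AddMonoidAlgebra.coeffLinearEquiv k).toLinearMap

lemma Phi_monomial (d : Fin 2 →₀ ℕ) (c : k) : Phi (monomial d c) = c • N k d := by
  rw [← single_eq_monomial]
  exact Finsupp.linearCombination_single k c d

lemma u_decomp (u : Fin 4 →₀ ℕ) :
    u = Finsupp.single 0 (u 0) + Finsupp.single 1 (u 1) + Finsupp.single 2 (u 2)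
      + Finsupp.single 3 (u 3) := by
  ext i
  fin_cases i <;> simp [Finsupp.single_apply]

lemma monomial_decomp (u : Fin 4 →₀ ℕ) (c : k) :
    (monomial u c : MvPolynomial (Fin 4) k)
      = C c * X 0 ^ u 0 * X 1 ^ u 1 * X 2 ^ u 2 * X 3 ^ u 3 := by
  conv_lhs => rw [u_decomp u]
  simp only [X_pow_eq_monomial, monomial_mul, C_mul_monomial]
  rw [mul_one, mul_one, mul_one, mul_one]

end SegreAux

namespace SegreAux

variable {k : Type*} [Field k]

lemma monomial_two (m0 m1 : ℕ) (c : k) :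
    (monomial (Finsupp.single 0 m0 + Finsupp.single 1 m1) c : MvPolynomial (Fin 2) k)
      = C c * X 0 ^ m0 * X 1 ^ m1 := by
  simp [X_pow_eq_monomial, monomial_mul, C_mul_monomial]

lemma phi_monomial (u : Fin 4 →₀ ℕ) (c : k) :
    (aeval ![(X 0 : MvPolynomial (Fin 2) k) ^ 2, X 0 * X 1, X 0 * X 1, X 1 ^ 2] :
        MvPolynomial (Fin 4) k →ₐ[k] MvPolynomial (Fin 2) k) (monomial u c)
      = monomial (Finsupp.single 0 (2 * u 0 + u 1 + u 2) + Finsupp.single 1 (u 1 + u 2 + 2 * u 3)) c := by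
  rw [monomial_decomp, monomial_two]
  simp only [map_mul, map_pow, aeval_X, aeval_C, algebraMap_eq,
    Matrix.cons_val_zero, Matrix.cons_val_one, Matrix.head_cons,
    Matrix.cons_val_two, Matrix.cons_val_three, Matrix.tail_cons]
  ring

lemma quot_eq (u : Fin 4 →₀ ℕ) (c : k) :
    pi k (monomial u c) = c • N k (Finsupp.single 0 (2 * u 0 + u 1 + u 2)
      + Finsupp.single 1 (u 1 + u 2 + 2 * u 3)) := by
  have key2 : pi k (X 1) ^ (u 1 + u 2)
      = pi k (X 0) ^ ((u 1 + u 2) / 2) * pi k (X 3) ^ ((u 1 + u 2) / 2)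
        * pi k (X 1) ^ ((u 1 + u 2) % 2) := by
    conv_lhs => rw [show u 1 + u 2 = 2 * ((u 1 + u 2) / 2) + (u 1 + u 2) % 2 by omega]
    rw [pow_reduce, mul_pow]
  have hN : N k (Finsupp.single 0 (2 * u 0 + u 1 + u 2)
        + Finsupp.single (1 : Fin 2) (u 1 + u 2 + 2 * u 3))
      = pi k (X 0) ^ (u 0 + (u 1 + u 2) / 2) * pi k (X 1) ^ ((u 1 + u 2) % 2)
        * pi k (X 3) ^ (u 3 + (u 1 + u 2) / 2) := by
    have e1 : (2 * u 0 + u 1 + u 2) / 2 = u 0 + (u 1 + u 2) / 2 := by omega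
    have e2 : (2 * u 0 + u 1 + u 2) % 2 = (u 1 + u 2) % 2 := by omega
    have e3 : (u 1 + u 2 + 2 * u 3) / 2 = u 3 + (u 1 + u 2) / 2 := by omega
    simp only [N, Finsupp.add_apply, Finsupp.single_eq_same,
      Finsupp.single_eq_of_ne (show (0 : Fin 2) ≠ 1 by decide),
      Finsupp.single_eq_of_ne (show (1 : Fin 2) ≠ 0 by decide), add_zero, zero_add, e1, e2, e3]
  have hsm : ∀ z : MvPolynomial (Fin 4) k ⧸ I k, c • z = algebraMap k _ c * z :=
    fun z => Algebra.smul_def c z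
  rw [monomial_decomp, hN, hsm]
  simp only [map_mul, map_pow, ← h1]
  rw [show pi k (MvPolynomial.C c) = algebraMap k _ c by
    rw [← MvPolynomial.algebraMap_eq, Ideal.Quotient.mk_algebraMap]]
  rw [pow_add, pow_add]
  linear_combination (algebraMap k (MvPolynomial (Fin 4) k ⧸ I k) c
    * pi k (X 0) ^ u 0 * pi k (X 3) ^ u 3) * key2

end SegreAux

namespace SegreAux

variable {k : Type*} [Field k]

lemma key (p : MvPolynomial (Fin 4) k) :
    pi k p = Phi ((aeval ![(X 0 : MvPolynomial (Fin 2) k) ^ 2, X 0 * X 1, X 0 * X 1, X 1 ^ 2] :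
      MvPolynomial (Fin 4) k →ₐ[k] MvPolynomial (Fin 2) k) p) := by
  induction p using MvPolynomial.induction_on' with
  | monomial u c => rw [phi_monomial, Phi_monomial, quot_eq]
  | add p q hp hq => rw [map_add, map_add, map_add, hp, hq]

end SegreAux

/-- Let `φ : k[Z00, Z01, Z10, Z11] → k[x, y]` be the `k`-algebra homomorphism
determined by `Z00 ↦ x²`, `Z01 ↦ x·y`, `Z10 ↦ x·y`, `Z11 ↦ y²` (with
`Z00 = X 0`, `Z01 = X 1`, `Z10 = X 2`, `Z11 = X 3` and `x = X 0`, `y = X 1`).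
Then `ker φ = (Z01 − Z10, Z00·Z11 − Z01·Z10)`. -/
theorem kernel_segre_diagonal (k : Type*) [Field k] :
    RingHom.ker
        (aeval ![(X 0 : MvPolynomial (Fin 2) k) ^ 2, X 0 * X 1, X 0 * X 1, X 1 ^ 2] :
          MvPolynomial (Fin 4) k →ₐ[k] MvPolynomial (Fin 2) k) =
      Ideal.span {(X 1 - X 2 : MvPolynomial (Fin 4) k), X 0 * X 3 - X 1 * X 2} := by
  apply le_antisymm
  · intro p hp
    rw [RingHom.mem_ker] at hp
    have h := SegreAux.key p
    rw [hp, map_zero] at h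
    exact Ideal.Quotient.eq_zero_iff_mem.mp h
  · rw [Ideal.span_le]
    rintro x hx
    simp only [Set.mem_insert_iff, Set.mem_singleton_iff] at hx
    rcases hx with rfl | rfl <;>
      · rw [SetLike.mem_coe, RingHom.mem_ker]
        simp only [map_sub, map_mul, map_pow, aeval_X,
          Matrix.cons_val_zero, Matrix.cons_val_one, Matrix.head_cons,
          Matrix.cons_val_two, Matrix.cons_val_three, Matrix.tail_cons]
        ring
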